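/- For all integers a, b ≥ 0, one has Σ_{j=0}^{min(a,b)} (2j+1) · binom(2a+1, a−j) · binom(2b+1, b−j) = α(2a+1)·α(2b+1)/(a+b+1), where α(2m+1) = (2m+1)!/(m!·m!). (This is the hypergeometric identity by which the decomposition of annular maps along the two extremal minimal separating cycles recovers the formula G_{L₁,L₂} = α(2L₁)α(2L₂)R^{L₁+L₂}/(L₁+L₂), in the quasi-bipartite case L₁ = a+1/2, L₂ = b+1/2.) -/

import Mathlib

/-- For all integers `a, b ≥ 0`,
`Σ_{j=0}^{min(a,b)} (2j+1) · C(2a+1, a−j) · C(2b+1, b−j) = α(2a+1) α(2b+1) / (a+b+1)`,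
where `α(2m+1) = (2m+1)! / (m! m!)`. -/
theorem annular_hypergeometric_identity_quasibipartite (a b : ℕ) :
    (∑ j ∈ Finset.range (min a b + 1),
        (2 * j + 1 : ℚ) * (Nat.choose (2 * a + 1) (a - j) : ℚ) * (Nat.choose (2 * b + 1) (b - j) : ℚ))
      = ((Nat.factorial (2 * a + 1) : ℚ) / ((Nat.factorial a : ℚ) * (Nat.factorial a : ℚ)))
        * ((Nat.factorial (2 * b + 1) : ℚ) / ((Nat.factorial b : ℚ) * (Nat.factorial b : ℚ)))
        / ((a : ℚ) + (b : ℚ) + 1) := by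
  set g : ℕ → ℚ := fun j =>
    ((a + 1 - j : ℕ) : ℚ) * ((b + 1 - j : ℕ) : ℚ) / ((a : ℚ) + (b : ℚ) + 1)
      * (Nat.choose (2 * a + 1) (a + 1 - j) : ℚ) * (Nat.choose (2 * b + 1) (b + 1 - j) : ℚ)
    with hg
  have habd : ((a : ℚ) + (b : ℚ) + 1) ≠ 0 := by positivity
  have key : ∀ j ∈ Finset.range (min a b + 1),
      (2 * j + 1 : ℚ) * (Nat.choose (2 * a + 1) (a - j) : ℚ) * (Nat.choose (2 * b + 1) (b - j) : ℚ)
        = g j - g (j + 1) := by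
    intro j hj
    rw [Finset.mem_range, Nat.lt_succ_iff, le_min_iff] at hj
    obtain ⟨hja, hjb⟩ := hj
    have h1 : a + 1 - j = (a - j) + 1 := by omega
    have h2 : b + 1 - j = (b - j) + 1 := by omega
    have h3 : a + 1 - (j + 1) = a - j := by omega
    have h4 : b + 1 - (j + 1) = b - j := by omega
    have hx : ((a - j : ℕ) : ℚ) = (a : ℚ) - (j : ℚ) := by
      push_cast [hja]; ring
    have hy : ((b - j : ℕ) : ℚ) = (b : ℚ) - (j : ℚ) := by
      push_cast [hjb]; ring
    have hxpos : ((a : ℚ) - (j : ℚ)) + 1 ≠ 0 := by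
      have : (j : ℚ) ≤ (a : ℚ) := by exact_mod_cast hja
      linarith
    have hypos : ((b : ℚ) - (j : ℚ)) + 1 ≠ 0 := by
      have : (j : ℚ) ≤ (b : ℚ) := by exact_mod_cast hjb
      linarith
    have hA : (Nat.choose (2*a+1) ((a - j) + 1) : ℚ) * (((a - j : ℕ) : ℚ) + 1)
        = (Nat.choose (2*a+1) (a - j) : ℚ) * ((a : ℚ) + 1 + (j : ℚ)) := by
      have h := Nat.choose_succ_right_eq (2*a+1) (a - j)
      have h5 : 2*a+1 - (a - j) = a + 1 + j := by omega
      rw [h5] at h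
      exact_mod_cast congrArg (Nat.cast : ℕ → ℚ) h
    have hB : (Nat.choose (2*b+1) ((b - j) + 1) : ℚ) * (((b - j : ℕ) : ℚ) + 1)
        = (Nat.choose (2*b+1) (b - j) : ℚ) * ((b : ℚ) + 1 + (j : ℚ)) := by
      have h := Nat.choose_succ_right_eq (2*b+1) (b - j)
      have h5 : 2*b+1 - (b - j) = b + 1 + j := by omega
      rw [h5] at h
      exact_mod_cast congrArg (Nat.cast : ℕ → ℚ) h
    rw [hx] at hA
    rw [hy] at hB
    have hA' : (Nat.choose (2*a+1) ((a - j) + 1) : ℚ)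
        = (Nat.choose (2*a+1) (a - j) : ℚ) * ((a : ℚ) + 1 + (j : ℚ)) / (((a : ℚ) - (j : ℚ)) + 1) := by
      field_simp
      linarith [hA]
    have hB' : (Nat.choose (2*b+1) ((b - j) + 1) : ℚ)
        = (Nat.choose (2*b+1) (b - j) : ℚ) * ((b : ℚ) + 1 + (j : ℚ)) / (((b : ℚ) - (j : ℚ)) + 1) := by
      field_simp
      linarith [hB]
    simp only [hg, h1, h2, h3, h4]
    push_cast
    rw [hx, hy, hA', hB']
    field_simp
    ring
  rw [Finset.sum_congr rfl key, Finset.sum_range_sub']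
  have hlast : g (min a b + 1) = 0 := by
    have h : a + 1 - (min a b + 1) = 0 ∨ b + 1 - (min a b + 1) = 0 := by omega
    rcases h with h | h <;> simp [hg, h]
  rw [hlast, sub_zero]
  simp only [hg]
  have hfa : (Nat.choose (2*a+1) (a+1) : ℚ) * ((a+1).factorial : ℚ) * (a.factorial : ℚ)
      = ((2*a+1).factorial : ℚ) := by
    have h := Nat.choose_mul_factorial_mul_factorial (show a + 1 ≤ 2*a+1 by omega)
    have h5 : 2*a+1 - (a+1) = a := by omega
    rw [h5] at h
    exact_mod_cast congrArg (Nat.cast : ℕ → ℚ) h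
  have hfb : (Nat.choose (2*b+1) (b+1) : ℚ) * ((b+1).factorial : ℚ) * (b.factorial : ℚ)
      = ((2*b+1).factorial : ℚ) := by
    have h := Nat.choose_mul_factorial_mul_factorial (show b + 1 ≤ 2*b+1 by omega)
    have h5 : 2*b+1 - (b+1) = b := by omega
    rw [h5] at h
    exact_mod_cast congrArg (Nat.cast : ℕ → ℚ) h
  have h6 : a + 1 - 0 = a + 1 := by omega
  have h7 : b + 1 - 0 = b + 1 := by omega
  rw [h6, h7, ← hfa, ← hfb, Nat.factorial_succ, Nat.factorial_succ]
  have hfan : (a.factorial : ℚ) ≠ 0 := by exact_mod_cast a.factorial_ne_zero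
  have hfbn : (b.factorial : ℚ) ≠ 0 := by exact_mod_cast b.factorial_ne_zero
  push_cast
  field_simp
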